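/- arXiv:cs/0510014 — 7 statements merged into one kernel-verified Lean document; each statement's English description precedes it below -/
import Mathlib

section
/- Let V be an n×r matrix whose columns form a basis of the A-invariant subspace W = Span(B, AB, ..., A^(n-1)B), and let T = [V | W'] be any invertible n×n matrix extending V to a basis of F^n. Then T⁻¹AT = [[H, X],[0, Y]] for some H ∈ M_r(F), and T⁻¹B = [[B₁],[0]] for some B₁ ∈ M_{r×m}(F). -/
open Matrix Submodule

private lemma sum_mulVec' {F : Type*} [Field F] {n : ℕ} (s : Finset ℕ)
    (f : ℕ → Matrix (Fin n) (Fin n) F) (b : Fin n → F) :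
    (∑ i ∈ s, f i) *ᵥ b = ∑ i ∈ s, f i *ᵥ b := by
  classical
  induction s using Finset.induction with
  | empty => simp [Matrix.mulVec, dotProduct]
  | insert _ _ h ih =>
    rw [Finset.sum_insert h, Finset.sum_insert h, Matrix.add_mulVec, ih]

/-- Cayley–Hamilton consequence: `A^n *ᵥ b` is in the span of `A^k *ᵥ b`, `k < n`. -/
private lemma pow_card_mulVec_mem {F : Type*} [Field F] {n : ℕ}
    (A : Matrix (Fin n) (Fin n) F) (b : Fin n → F) (hn : 0 < n)
    (S : Submodule F (Fin n → F)) (hS : ∀ k < n, (A ^ k) *ᵥ b ∈ S) :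
    (A ^ n) *ᵥ b ∈ S := by
  have hCH := A.aeval_self_charpoly
  have hdeg : A.charpoly.natDegree = n := by
    simpa using A.charpoly_natDegree_eq_dim
  have hc1 : A.charpoly.coeff n = 1 := by
    have := A.charpoly_monic.coeff_natDegree
    rwa [hdeg] at this
  rw [Polynomial.aeval_eq_sum_range, hdeg, Finset.sum_range_succ, hc1, one_smul] at hCH
  have hAn : (A ^ n : Matrix (Fin n) (Fin n) F) =
      -∑ i ∈ Finset.range n, A.charpoly.coeff i • A ^ i :=
    eq_neg_of_add_eq_zero_right hCH
  rw [hAn, Matrix.neg_mulVec, sum_mulVec']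
  refine neg_mem (Submodule.sum_mem _ fun i hi => ?_)
  rw [Matrix.smul_mulVec]
  exact Submodule.smul_mem _ _ (hS i (Finset.mem_range.mp hi))

/-- If the first `r` columns of an invertible matrix `T` form a basis of the controllable
subspace `W = Span(B, AB, ..., A^(n-1)B)`, then `T⁻¹AT` is block upper triangular with
an `r×r` leading block and the last `n-r` rows of `T⁻¹B` vanish. -/
theorem stmt5 {F : Type*} [Field F] {n m r : ℕ} (A : Matrix (Fin n) (Fin n) F)
    (B : Matrix (Fin n) (Fin m) F)
    (V : Matrix (Fin n) (Fin r) F)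
    (hspan : span F (Set.range fun j : Fin r => fun i => V i j) =
      span F {x | ∃ k < n, ∃ j : Fin m, x = (A ^ k) *ᵥ (fun i => B i j)})
    (hVind : LinearIndependent F (fun j : Fin r => fun i => V i j))
    (T : Matrix (Fin n) (Fin n) F) (hT : IsUnit T.det)
    (hTV : ∀ (i : Fin n) (j : Fin n) (hj : (j : ℕ) < r), T i j = V i ⟨(j : ℕ), hj⟩) :
    (∀ i j : Fin n, r ≤ (i : ℕ) → (j : ℕ) < r → (T⁻¹ * A * T) i j = 0) ∧
    (∀ (i : Fin n) (j : Fin m), r ≤ (i : ℕ) → (T⁻¹ * B) i j = 0) := by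
  classical
  set S : Submodule F (Fin n → F) :=
    span F {x | ∃ k < n, ∃ j : Fin m, x = (A ^ k) *ᵥ (fun i => B i j)} with hSdef
  have hrn : r ≤ n := by
    have := hVind.fintype_card_le_finrank
    simpa [Module.finrank_fintype_fun_eq_card] using this
  -- membership of generators
  have hgen : ∀ k < n, ∀ j : Fin m, (A ^ k) *ᵥ (fun i => B i j) ∈ S :=
    fun k hk j => subset_span ⟨k, hk, j, rfl⟩
  -- A-invariance of S
  have hAinv : ∀ x ∈ S, A *ᵥ x ∈ S := by
    intro x hx
    induction hx using Submodule.span_induction with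
    | mem y hy =>
      obtain ⟨k, hk, j, rfl⟩ := hy
      rw [Matrix.mulVec_mulVec, ← pow_succ']
      rcases lt_or_eq_of_le (Nat.succ_le_of_lt hk) with h | h
      · exact hgen _ h j
      · rw [show k + 1 = n from h]
        exact pow_card_mulVec_mem A _ ((Nat.zero_le k).trans_lt hk) S (fun k' hk' => hgen k' hk' j)
    | zero => simpa [Matrix.mulVec_zero] using S.zero_mem
    | add x y _ _ hx hy => rw [Matrix.mulVec_add]; exact S.add_mem hx hy
    | smul c x _ hx => rw [Matrix.mulVec_smul]; exact S.smul_mem c hx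
  -- key coordinate fact
  have hcoord : ∀ v ∈ S, ∀ i : Fin n, r ≤ (i : ℕ) → (T⁻¹ *ᵥ v) i = 0 := by
    intro v hv i hi
    rw [← hspan] at hv
    obtain ⟨c, hc⟩ := (mem_span_range_iff_exists_fun F).mp hv
    set c' : Fin n → F := fun j => if h : (j : ℕ) < r then c ⟨(j : ℕ), h⟩ else 0 with hc'def
    have hTc' : T *ᵥ c' = v := by
      funext i'
      rw [← hc]
      simp only [Finset.sum_apply, Pi.smul_apply, smul_eq_mul]
      have e1 : ∀ j : Fin n, T i' j * c' j =
          (fun jn : ℕ => if h : jn < r then c ⟨jn, h⟩ * V i' ⟨jn, h⟩ else 0) (j : ℕ) := by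
        intro j
        by_cases h : (j : ℕ) < r
        · simp only [hc'def, h, dif_pos, hTV i' j h]
          ring
        · simp [hc'def, h]
      calc (T *ᵥ c') i'
          = ∑ j : Fin n, T i' j * c' j := by
            simp [Matrix.mulVec, dotProduct]
        _ = ∑ j : Fin n,
              (fun jn : ℕ => if h : jn < r then c ⟨jn, h⟩ * V i' ⟨jn, h⟩ else 0) (j : ℕ) :=
            Finset.sum_congr rfl fun j _ => e1 j
        _ = ∑ jn ∈ Finset.range n,
              (if h : jn < r then c ⟨jn, h⟩ * V i' ⟨jn, h⟩ else 0) :=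
            by exact Fin.sum_univ_eq_sum_range (fun jn : ℕ => if h : jn < r then c ⟨jn, h⟩ * V i' ⟨jn, h⟩ else 0) n
        _ = ∑ jn ∈ Finset.range r,
              (if h : jn < r then c ⟨jn, h⟩ * V i' ⟨jn, h⟩ else 0) := by
            refine (Finset.sum_subset (Finset.range_subset_range.mpr hrn) ?_).symm
            intro x _ hx
            rw [Finset.mem_range] at hx
            simp [hx]
        _ = ∑ j : Fin r, (if h : (j : ℕ) < r then c ⟨(j : ℕ), h⟩ * V i' ⟨(j : ℕ), h⟩ else 0) :=
            by exact (Fin.sum_univ_eq_sum_range (fun jn : ℕ => if h : jn < r then c ⟨jn, h⟩ * V i' ⟨jn, h⟩ else 0) r).symm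
        _ = ∑ j : Fin r, c j * V i' j := by
            refine Finset.sum_congr rfl fun j _ => ?_
            simp [j.isLt]
    have hTv : T⁻¹ *ᵥ v = c' := by
      rw [← hTc', Matrix.mulVec_mulVec, Matrix.nonsing_inv_mul T hT, Matrix.one_mulVec]
    rw [hTv, hc'def]
    simp [Nat.not_lt.mpr hi]
  constructor
  · intro i j hi hj
    have hcol : (fun k => T k j) = (fun k => V k ⟨(j : ℕ), hj⟩) := funext fun k => hTV k j hj
    have hmem : (fun k => V k ⟨(j : ℕ), hj⟩) ∈ S := by
      rw [← hspan]
      exact subset_span ⟨⟨(j : ℕ), hj⟩, rfl⟩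
    have h2 : A *ᵥ (fun k => T k j) ∈ S := by rw [hcol]; exact hAinv _ hmem
    have h3 := hcoord _ h2 i hi
    rw [Matrix.mulVec_mulVec] at h3
    calc (T⁻¹ * A * T) i j = ((T⁻¹ * A) *ᵥ (fun k => T k j)) i := by
          simp [Matrix.mul_apply, Matrix.mulVec, dotProduct]
      _ = 0 := h3
  · intro i j hi
    have hmem : (fun k => B k j) ∈ S := by
      refine subset_span ⟨0, i.pos, j, ?_⟩
      simp
    have h3 := hcoord _ hmem i hi
    calc (T⁻¹ * B) i j = (T⁻¹ *ᵥ (fun k => B k j)) i := by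
          simp [Matrix.mul_apply, Matrix.mulVec, dotProduct]
      _ = 0 := h3
end

section
/- Let V be an n×r matrix of rank r, and suppose Vᵀ = L[U₁ U₂]P is an LUP factorization with L ∈ GL_r(F) lower triangular, U₁ ∈ GL_r(F) upper triangular, U₂ ∈ M_{r×(n−r)}(F), and P a permutation matrix. Then the n×n matrix T = [ V | Pᵀ·[0; I_{n−r}] ] is invertible. -/
open Matrix

/-- Completing an `n×r` full-column-rank matrix `V` with `Vᵀ = L·[U₁ U₂]·P` into the
invertible matrix `T = [V | Pᵀ·[0; I]]`. -/
theorem stmt11 {F : Type*} [Field F] {r s : ℕ} (hr : 0 < r)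
    (V : Matrix (Fin r ⊕ Fin s) (Fin r) F) (hrank : V.rank = r)
    (L U₁ : Matrix (Fin r) (Fin r) F) (U₂ : Matrix (Fin r) (Fin s) F)
    (σ : Equiv.Perm (Fin r ⊕ Fin s))
    (hL : IsUnit L.det) (hU₁ : IsUnit U₁.det)
    (hLtri : ∀ i j : Fin r, i < j → L i j = 0)
    (hUtri : ∀ i j : Fin r, j < i → U₁ i j = 0)
    (hfact : Vᵀ = L * Matrix.fromCols U₁ U₂ * σ.permMatrix F) :
    IsUnit (Matrix.fromCols V ((σ.permMatrix F)ᵀ *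
      Matrix.fromRows (0 : Matrix (Fin r) (Fin s) F)
        (1 : Matrix (Fin s) (Fin s) F))).det := by
  have hV : V = (σ.permMatrix F)ᵀ * fromRows (U₁ᵀ * Lᵀ) (U₂ᵀ * Lᵀ) := by
    have := congrArg Matrix.transpose hfact
    simp only [transpose_transpose, transpose_mul, transpose_fromCols,
      fromRows_mul] at this
    exact this
  rw [hV, ← mul_fromCols, fromCols_fromRows_eq_fromBlocks, det_mul,
    det_fromBlocks_zero₁₂]
  simp only [det_mul, det_transpose, det_one, mul_one, det_permutation]
  exact ((Equiv.Perm.sign σ).isUnit.map (Int.castRingHom F)).mul (hU₁.mul hL)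
end

section
/- (Correctness of greedy column selection / lexicographic maximality) Let b_1,...,b_m ∈ F^n and A ∈ M_n(F). For the Krylov matrix K = [b_1, Ab_1, ..., A^{n-1}b_1, ..., b_m, ..., A^{n-1}b_m], selecting from left to right each column linearly independent of the previously selected ones yields columns of the form b_1,...,A^{d_1−1}b_1, ..., b_m,...,A^{d_m−1}b_m for some exponents d_i with Σd_i = rank(K); moreover the resulting sequence (d_1,...,d_m) is lexicographically maximal among all sequences (e_1,...,e_m) for which b_1,...,A^{e_1−1}b_1,...,b_m,...,A^{e_m−1}b_m are linearly independent and span the column space of K. -/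
open Matrix Submodule

/-- The range of the sigma-indexed Krylov family equals the corresponding set of vectors. -/
lemma krylov_range_eq {F : Type*} [Field F] {n m : ℕ} (A : Matrix (Fin n) (Fin n) F)
    (b : Fin m → Fin n → F) (c : Fin m → ℕ) :
    Set.range (fun p : (j : Fin m) × Fin (c j) => (A ^ ((p.2 : ℕ))) *ᵥ b p.1) =
      {x | ∃ j : Fin m, ∃ l < c j, x = (A ^ l) *ᵥ b j} := by
  ext x
  constructor
  · rintro ⟨⟨j, l⟩, rfl⟩
    exact ⟨j, l, l.isLt, rfl⟩
  · rintro ⟨j, l, hl, rfl⟩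
    exact ⟨⟨j, ⟨l, hl⟩⟩, rfl⟩

/-- Correctness of greedy left-to-right column selection in the Krylov matrix: the
selected exponents `d` satisfy `Σ d_i = rank K`, and `(d_1, ..., d_m)` is
lexicographically maximal among all exponent sequences `e` whose associated columns are
linearly independent and span the column space of `K`. -/
theorem stmt14 {F : Type*} [Field F] {n m : ℕ} (A : Matrix (Fin n) (Fin n) F)
    (b : Fin m → Fin n → F) (d : Fin m → ℕ)
    (hind : LinearIndependent F
      (fun p : (j : Fin m) × Fin (d j) => (A ^ ((p.2 : ℕ))) *ᵥ b p.1))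
    (hgreedy : ∀ i : Fin m, (A ^ (d i)) *ᵥ b i ∈
      span F {x | ∃ j ≤ i, ∃ l < d j, x = (A ^ l) *ᵥ b j}) :
    (∑ j, d j) = Module.finrank F
      (span F {x | ∃ j : Fin m, ∃ l < n, x = (A ^ l) *ᵥ b j}) ∧
    ∀ e : Fin m → ℕ,
      LinearIndependent F
        (fun p : (j : Fin m) × Fin (e j) => (A ^ ((p.2 : ℕ))) *ᵥ b p.1) →
      span F {x | ∃ j : Fin m, ∃ l < e j, x = (A ^ l) *ᵥ b j} =
        span F {x | ∃ j : Fin m, ∃ l < n, x = (A ^ l) *ᵥ b j} →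
      toLex e ≤ toLex d := by
  classical
  set v : Fin m → ℕ → (Fin n → F) := fun j l => (A ^ l) *ᵥ b j with hv
  -- the span of the greedily selected columns
  set W : Submodule F (Fin n → F) :=
    span F {x | ∃ j : Fin m, ∃ l < d j, x = v j l} with hW
  -- W is stable under multiplication by A
  have hstable : ∀ x ∈ W, A *ᵥ x ∈ W := by
    intro x hx
    induction hx using span_induction with
    | mem x hx =>
      obtain ⟨j, l, hl, rfl⟩ := hx
      have : A *ᵥ v j l = v j (l + 1) := by
        simp only [hv, mulVec_mulVec, ← pow_succ']
      rw [this]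
      rcases lt_or_eq_of_le (Nat.succ_le_of_lt hl) with h | h
      · exact subset_span ⟨j, l + 1, h, rfl⟩
      · have h' : l + 1 = d j := h
        rw [h']
        refine span_le.2 ?_ (hgreedy j)
        intro y hy
        obtain ⟨j', _, l', hl', rfl⟩ := hy
        exact subset_span ⟨j', l', hl', rfl⟩
    | zero => simp
    | add x y _ _ hx hy => rw [mulVec_add]; exact W.add_mem hx hy
    | smul a x _ hx => rw [mulVec_smul]; exact W.smul_mem a hx
  -- every Krylov vector lies in W
  have hmem : ∀ (j : Fin m) (l : ℕ), v j l ∈ W := by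
    intro j l
    induction l with
    | zero =>
      rcases Nat.eq_zero_or_pos (d j) with h | h
      · have := hgreedy j
        rw [h] at this
        refine span_le.2 ?_ this
        intro y hy
        obtain ⟨j', _, l', hl', rfl⟩ := hy
        exact subset_span ⟨j', l', hl', rfl⟩
      · exact subset_span ⟨j, 0, h, rfl⟩
    | succ l ih =>
      have : v j (l + 1) = A *ᵥ v j l := by
        simp only [hv, mulVec_mulVec, ← pow_succ']
      rw [this]
      exact hstable _ ih
  -- each d j is at most n
  have hcard : (∑ j, d j) ≤ n := by
    have := hind.fintype_card_le_finrank
    simpa [Fintype.card_sigma, Module.finrank_pi] using this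
  have hdn : ∀ j, d j ≤ n := fun j =>
    le_trans (Finset.single_le_sum (f := d) (fun _ _ => Nat.zero_le _) (Finset.mem_univ j)) hcard
  -- the full Krylov span equals W
  have hspan : span F {x | ∃ j : Fin m, ∃ l < n, x = (A ^ l) *ᵥ b j} = W := by
    apply le_antisymm
    · refine span_le.2 ?_
      rintro x ⟨j, l, _, rfl⟩
      exact hmem j l
    · refine span_le.2 ?_
      rintro x ⟨j, l, hl, rfl⟩
      exact subset_span ⟨j, l, lt_of_lt_of_le hl (hdn j), rfl⟩
  constructor
  · -- sum of d equals finrank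
    rw [hspan, hW, ← krylov_range_eq A b d]
    rw [finrank_span_eq_card hind]
    simp [Fintype.card_sigma]
  · -- lexicographic maximality
    intro e he _
    by_contra hle
    have htri := (Pi.isTrichotomous_lex (· < ·) (@fun _ => ((· < ·) : ℕ → ℕ → Prop))
      ((wellFounded_lt (α := Fin m)))).trichotomous (a := e) (b := d)
    have hlt : Pi.Lex (· < ·) (@fun _ => ((· < ·) : ℕ → ℕ → Prop)) d e := by
      by_contra h3
      by_cases h : Pi.Lex (· < ·) (@fun _ => ((· < ·) : ℕ → ℕ → Prop)) e d
      · exact absurd (Or.inr h : toLex e ≤ toLex d) hle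
      · exact absurd (Or.inl (congrArg toLex (htri h h3)) : toLex e ≤ toLex d) hle
    obtain ⟨i, hji, hdi⟩ := hlt
    -- the submodule spanned by the greedy columns up to index i
    set Wi : Submodule F (Fin n → F) :=
      span F {x | ∃ j ≤ i, ∃ l < d j, x = v j l} with hWi
    -- dimension counting: Wi is spanned by Σ_{j ≤ i} d j vectors
    set d' : Fin m → ℕ := fun j => if j ≤ i then d j else 0 with hd'
    have hWiset : {x | ∃ j ≤ i, ∃ l < d j, x = v j l}
        = {x | ∃ j : Fin m, ∃ l < d' j, x = v j l} := by
      ext x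
      constructor
      · rintro ⟨j, hj, l, hl, rfl⟩
        exact ⟨j, l, by simp [hd', hj, hl], rfl⟩
      · rintro ⟨j, l, hl, rfl⟩
        by_cases hj : j ≤ i
        · exact ⟨j, hj, l, by simpa [hd', hj] using hl, rfl⟩
        · simp [hd', hj] at hl
    have hWirank : Module.finrank F Wi ≤ ∑ j, d' j := by
      rw [hWi, hWiset, ← krylov_range_eq A b d']
      refine le_trans (finrank_range_le_card _) ?_
      simp [Fintype.card_sigma]
    -- an independent family of size ∑ d' + 1 inside Wi
    set c : Fin m → ℕ := fun j => if j < i then e j else if j = i then d i + 1 else 0 with hc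
    have hce : ∀ j, c j ≤ e j := by
      intro j
      by_cases h1 : j < i
      · simp [hc, h1]
      · by_cases h2 : j = i
        · subst h2
          simp only [hc, h1, if_false, if_pos rfl]
          exact hdi
        · simp [hc, h1, h2]
    -- the inclusion into the e-indexed family
    set φ : ((j : Fin m) × Fin (c j)) → ((j : Fin m) × Fin (e j)) :=
      fun p => ⟨p.1, ⟨p.2, lt_of_lt_of_le p.2.isLt (hce p.1)⟩⟩ with hφ
    have hφinj : Function.Injective φ := by
      rintro ⟨j, l⟩ ⟨j', l'⟩ h
      simp only [hφ, Sigma.mk.inj_iff] at h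
      obtain ⟨rfl, h2⟩ := h
      simp only [heq_eq_eq, Fin.mk.injEq] at h2
      exact congrArg _ (Fin.ext h2)
    have hindc : LinearIndependent F
        (fun p : (j : Fin m) × Fin (c j) => v p.1 (p.2 : ℕ)) := by
      have := he.comp φ hφinj
      exact this
    -- all these vectors lie in Wi
    have hsub : ∀ p : (j : Fin m) × Fin (c j), v p.1 (p.2 : ℕ) ∈ Wi := by
      rintro ⟨j, l⟩
      by_cases h1 : j < i
      · have hl : (l : ℕ) < d j := by
          have : (l : ℕ) < e j := by simpa [hc, h1] using l.isLt
          rwa [← hji j h1] at this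
        exact subset_span ⟨j, le_of_lt h1, l, hl, rfl⟩
      · by_cases h2 : j = i
        · subst h2
          have hl : (l : ℕ) < d j + 1 := by simpa [hc, h1] using l.isLt
          rcases lt_or_eq_of_le (Nat.lt_succ_iff.1 hl) with h | h
          · exact subset_span ⟨j, le_refl j, l, h, rfl⟩
          · rw [hv]; rw [h]
            exact hgreedy j
        · exfalso
          have := l.isLt
          simp [hc, h1, h2] at this
    -- independence inside the submodule Wi
    have hindW : LinearIndependent F
        (fun p : (j : Fin m) × Fin (c j) =>
          (⟨v p.1 (p.2 : ℕ), hsub p⟩ : Wi)) := by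
      apply LinearIndependent.of_comp Wi.subtype
      exact hindc
    have hbound : Fintype.card ((j : Fin m) × Fin (c j)) ≤ Module.finrank F Wi :=
      hindW.fintype_card_le_finrank
    have hsum : (∑ j, c j) = (∑ j, d' j) + 1 := by
      have hcd : ∀ j, c j = d' j + (if j = i then 1 else 0) := by
        intro j
        by_cases h1 : j < i
        · simp [hc, hd', h1, le_of_lt h1, ne_of_lt h1, ← hji j h1]
        · by_cases h2 : j = i
          · subst h2; simp [hc, hd', h1]
          · have : ¬ j ≤ i := fun h => h2 (le_antisymm h (not_lt.1 h1))
            simp [hc, hd', h1, h2, this]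
      rw [Finset.sum_congr rfl (fun j _ => hcd j), Finset.sum_add_distrib]
      simp
    rw [Fintype.card_sigma] at hbound
    simp only [Fintype.card_fin] at hbound
    omega
end

section
/- Let A ∈ M_n(F), B ∈ M_{n×m}(F), with Kalman decomposition T⁻¹AT = [[H,X],[0,Y]] and T⁻¹B = [[B₁],[0]], H of size r×r where r = dim Span(B,...,A^{n-1}B). Then the pair (H, B₁) is controllable, i.e., Span(B₁, HB₁, ..., H^{r-1}B₁) = F^r. -/
open Matrix Submodule Polynomial

/-- Extension by zero as a linear map. -/
private def extZero (F : Type*) [Field F] (r s : ℕ) :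
    (Fin r → F) →ₗ[F] (Fin r ⊕ Fin s → F) where
  toFun v := Sum.elim v 0
  map_add' u v := by funext i; cases i <;> simp
  map_smul' c v := by funext i; cases i <;> simp

private lemma powMem {F : Type*} [Field F] {r : ℕ} (hr0 : 0 < r)
    (H : Matrix (Fin r) (Fin r) F) (v : Fin r → F)
    (U : Submodule F (Fin r → F))
    (hU : ∀ k < r, (H ^ k) *ᵥ v ∈ U) (k : ℕ) : (H ^ k) *ᵥ v ∈ U := by
  have hmon := H.charpoly_monic
  have hdeg : (X ^ k %ₘ H.charpoly).natDegree < r := by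
    have h1 : H.charpoly ≠ 1 := by
      intro h
      have := H.charpoly_natDegree_eq_dim
      rw [h] at this
      simp at this
      omega
    have := Polynomial.natDegree_modByMonic_lt (X ^ k) hmon h1
    rwa [H.charpoly_natDegree_eq_dim, Fintype.card_fin] at this
  have hk : H ^ k = ∑ i ∈ Finset.range r, (X ^ k %ₘ H.charpoly).coeff i • H ^ i := by
    rw [Matrix.pow_eq_aeval_mod_charpoly, Polynomial.aeval_eq_sum_range' hdeg]
  rw [hk]
  have : (∑ i ∈ Finset.range r, (X ^ k %ₘ H.charpoly).coeff i • H ^ i) *ᵥ v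
      = ∑ i ∈ Finset.range r, (X ^ k %ₘ H.charpoly).coeff i • ((H ^ i) *ᵥ v) := by
    induction (Finset.range r) using Finset.induction with
    | empty => simp
    | insert _ _ h ih => simp [Finset.sum_insert h, Matrix.add_mulVec, ih, Matrix.smul_mulVec]
  rw [this]
  exact Submodule.sum_mem _ fun i hi => Submodule.smul_mem _ _
    (hU i (Finset.mem_range.mp hi))

/-- The controllable pair extracted by the Kalman decomposition: if
`T⁻¹AT = [[H,X],[0,Y]]` and `T⁻¹B = [[B₁],[0]]` with `r` the dimension of the
controllable subspace of `(A,B)`, then `(H, B₁)` is controllable. -/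
theorem stmt15 {F : Type*} [Field F] {r s m : ℕ}
    (A : Matrix (Fin r ⊕ Fin s) (Fin r ⊕ Fin s) F)
    (B : Matrix (Fin r ⊕ Fin s) (Fin m) F)
    (T : Matrix (Fin r ⊕ Fin s) (Fin r ⊕ Fin s) F) (hT : IsUnit T.det)
    (H : Matrix (Fin r) (Fin r) F) (X : Matrix (Fin r) (Fin s) F)
    (Y : Matrix (Fin s) (Fin s) F) (B₁ : Matrix (Fin r) (Fin m) F)
    (hA : T⁻¹ * A * T = Matrix.fromBlocks H X 0 Y)
    (hB : T⁻¹ * B = Matrix.fromRows B₁ 0)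
    (hr : Module.finrank F
      (span F {x | ∃ k < r + s, ∃ j : Fin m, x = (A ^ k) *ᵥ (fun i => B i j)}) = r) :
    span F {x | ∃ k < r, ∃ j : Fin m, x = (H ^ k) *ᵥ (fun i => B₁ i j)} = ⊤ := by
  classical
  rcases Nat.eq_zero_or_pos r with hr0 | hr0
  · subst hr0
    exact Subsingleton.elim _ _
  set M := Matrix.fromBlocks H X 0 Y with hM
  have hTinv : T * T⁻¹ = 1 := Matrix.mul_nonsing_inv T hT
  have hinvT : T⁻¹ * T = 1 := Matrix.nonsing_inv_mul T hT
  have hA' : A = T * M * T⁻¹ := by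
    rw [← hA]
    calc A = (T * T⁻¹) * A * (T * T⁻¹) := by rw [hTinv]; simp
    _ = T * (T⁻¹ * A * T) * T⁻¹ := by simp only [Matrix.mul_assoc]
  have hB' : B = T * (Matrix.fromRows B₁ 0 : Matrix (Fin r ⊕ Fin s) (Fin m) F) := by
    rw [← hB, ← Matrix.mul_assoc, hTinv, Matrix.one_mul]
  -- block power acting on extended vectors
  have hMk : ∀ (k : ℕ) (w : Fin r → F),
      (M ^ k) *ᵥ Sum.elim w 0 = Sum.elim ((H ^ k) *ᵥ w) 0 := by
    intro k
    induction k with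
    | zero => intro w; simp
    | succ k ih =>
      intro w
      rw [pow_succ', pow_succ', ← Matrix.mulVec_mulVec, ih, hM,
        Matrix.fromBlocks_mulVec]
      simp
  have hAk : ∀ (k : ℕ), A ^ k = T * M ^ k * T⁻¹ := by
    intro k
    rw [hA']
    induction k with
    | zero => simp [hTinv]
    | succ k ih =>
      rw [pow_succ, pow_succ, ih]
      calc T * M ^ k * T⁻¹ * (T * M * T⁻¹)
          = T * M ^ k * (T⁻¹ * T) * M * T⁻¹ := by simp only [Matrix.mul_assoc]
        _ = T * (M ^ k * M) * T⁻¹ := by rw [hinvT]; simp only [Matrix.mul_one, Matrix.mul_assoc]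
  -- key identity
  have key : ∀ (k : ℕ) (j : Fin m),
      (A ^ k) *ᵥ (fun i => B i j) = T *ᵥ Sum.elim ((H ^ k) *ᵥ (fun i => B₁ i j)) 0 := by
    intro k j
    have hBcol : (fun i => B i j) = T *ᵥ Sum.elim (fun i => B₁ i j) 0 := by
      funext i
      rw [hB']
      simp only [Matrix.mul_apply, Matrix.mulVec, dotProduct]
      congr 1
      funext x
      cases x <;> simp
    rw [hBcol, hAk, Matrix.mulVec_mulVec, Matrix.mul_assoc, Matrix.mul_assoc, hinvT,
      Matrix.mul_one, ← Matrix.mulVec_mulVec, hMk]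
  -- the injective map g
  set g : (Fin r → F) →ₗ[F] (Fin r ⊕ Fin s → F) :=
    (Matrix.mulVecLin T).comp (extZero F r s) with hg
  have hginj : Function.Injective g := by
    have h1 : Function.Injective (Matrix.mulVecLin T) := by
      intro x y hxy
      have := congrArg (fun v => T⁻¹ *ᵥ v) hxy
      simpa [Matrix.mulVec_mulVec, hinvT] using this
    have h2 : Function.Injective (extZero F r s) := by
      intro x y hxy
      funext i
      exact congrFun hxy (Sum.inl i)
    exact h1.comp h2
  set S' : Submodule F (Fin r → F) :=
    span F {x | ∃ k < r + s, ∃ j : Fin m, x = (H ^ k) *ᵥ (fun i => B₁ i j)} with hS'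
  have hmap : Submodule.map g S' =
      span F {x | ∃ k < r + s, ∃ j : Fin m, x = (A ^ k) *ᵥ (fun i => B i j)} := by
    rw [hS', Submodule.map_span]
    congr 1
    ext x
    constructor
    · rintro ⟨y, ⟨k, hk, j, rfl⟩, rfl⟩
      exact ⟨k, hk, j, (key k j).symm⟩
    · rintro ⟨k, hk, j, rfl⟩
      exact ⟨(H ^ k) *ᵥ (fun i => B₁ i j), ⟨k, hk, j, rfl⟩, (key k j).symm⟩
  have hfinS' : Module.finrank F S' = r := by
    have := (Submodule.equivMapOfInjective g hginj S').finrank_eq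
    rw [this, hmap, hr]
  have hS'top : S' = ⊤ := by
    apply Submodule.eq_top_of_finrank_eq
    rw [hfinS']
    simp [Module.finrank_pi]
  -- reduce to k < r via Cayley-Hamilton
  rw [← top_le_iff, ← hS'top, hS']
  apply Submodule.span_le.mpr
  rintro x ⟨k, hk, j, rfl⟩
  apply powMem hr0 H (fun i => B₁ i j) _ _ k
  intro k' hk'
  exact Submodule.subset_span ⟨k', hk', j, rfl⟩
end

section
/- Let A ∈ M_n(F) and v ∈ F^n with Krylov matrix K = [v|Av|...|A^n v] (n+1 columns), where the first n columns are linearly independent. Suppose Kᵀ admits a factorization Kᵀ = L·U·P' appropriately (LUP of the (n+1)×n matrix Kᵀ) with L unit lower triangular of size (n+1)×(n+1) in the relevant sense. Writing A^n v = Σ_{i=0}^{n-1} m_i A^i v, the last row of the 'L' factor satisfies L_{n+1} = (m_0,...,m_{n-1})·L_{1..n}, so the coefficients m_i are recovered by solving the triangular system (m_0,...,m_{n-1}) = L_{n+1}·(L_{1..n})⁻¹. -/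
open Matrix

/-- Recovery of the minimal polynomial coefficients from the `L` factor of the LUP
factorization of the transposed Krylov matrix: if `(Kᵀ)_{1..n} = L_{1..n}·U·P` and
`(Kᵀ)_{n+1} = L_{n+1}·U·P` with `A^n v = Σ m_i A^i v`, then
`L_{n+1} = (m_0,...,m_{n-1})·L_{1..n}`. -/
theorem stmt16 {F : Type*} [Field F] {n : ℕ} (A : Matrix (Fin n) (Fin n) F)
    (v : Fin n → F)
    (hind : LinearIndependent F (fun i : Fin n => (A ^ (i : ℕ)) *ᵥ v))
    (m : Fin n → F)
    (hm : (A ^ n) *ᵥ v = ∑ i : Fin n, m i • ((A ^ (i : ℕ)) *ᵥ v))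
    (L : Matrix (Fin (n + 1)) (Fin (n + 1)) F)
    (hLtri : ∀ i j : Fin (n + 1), i < j → L i j = 0)
    (U : Matrix (Fin n) (Fin n) F) (hU : IsUnit U.det)
    (hUtri : ∀ i j : Fin n, j < i → U i j = 0)
    (σ : Equiv.Perm (Fin n))
    (Ltop : Matrix (Fin n) (Fin n) F)
    (hLtop : Ltop = fun i j => L i.castSucc j.castSucc)
    (Lrow : Fin n → F)
    (hLrow : Lrow = fun j => L (Fin.last n) j.castSucc)
    (h1 : (fun (i j : Fin n) => ((A ^ (i : ℕ)) *ᵥ v) j) = Ltop * U * σ.permMatrix F)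
    (h2 : (fun j => ((A ^ n) *ᵥ v) j) = Matrix.vecMul Lrow (U * σ.permMatrix F)) :
    Lrow = Matrix.vecMul m Ltop := by
  set B := U * σ.permMatrix F with hB
  have hBdet : IsUnit B.det := by
    rw [hB, Matrix.det_mul, Matrix.det_permutation]
    exact hU.mul (IsUnit.map (Int.castRingHom F) (σ.sign).isUnit)
  have hK : (fun j => ((A ^ n) *ᵥ v) j)
      = Matrix.vecMul m (fun (i j : Fin n) => ((A ^ (i : ℕ)) *ᵥ v) j) := by
    funext j
    simp [hm, Matrix.vecMul, dotProduct, Finset.sum_apply, mul_comm]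
  have key : Matrix.vecMul Lrow B = Matrix.vecMul (Matrix.vecMul m Ltop) B := by
    rw [← h2, hK, h1, Matrix.mul_assoc, ← hB, Matrix.vecMul_vecMul]
  have := congrArg (fun w => Matrix.vecMul w B⁻¹) key
  simpa [Matrix.vecMul_vecMul, Matrix.mul_assoc, Matrix.mul_nonsing_inv B hBdet] using this
end

section
/- (Correctness of the recursive step of Kalman-LUK) Let A ∈ M_n(F), B ∈ M_{n×m}(F), and v the first column of B with minimal polynomial (relative to A) of degree r₁ < n. Let W₁ = Span(v, Av, ..., A^{r₁−1}v), and let A_R be the matrix of the induced map on F^n/W₁ (in a basis completing a basis of W₁), Z the induced image of the remaining columns of B in F^n/W₁. Then dim Span(B, AB, ..., A^{n−1}B) = r₁ + dim Span(Z, A_R Z, ..., A_R^{n−r₁−1} Z). -/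
open Matrix Submodule

/-- Correctness of the recursive step of Kalman-LUK: the dimension of the controllable
subspace of `(A, B)` equals `r₁` plus the dimension of the controllable subspace of the
induced pair `(A_R, Z)` on the quotient by the cyclic subspace `W₁` generated by the
first column `v` of `B`. -/
theorem stmt18 {F : Type*} [Field F] {n m r₁ : ℕ} (A : Matrix (Fin n) (Fin n) F)
    (B : Matrix (Fin n) (Fin m) F) (hm : 0 < m)
    (v : Fin n → F) (hv : v = fun i => B i ⟨0, hm⟩) (hvne : v ≠ 0)
    (hind : LinearIndependent F (fun k : Fin r₁ => (A ^ (k : ℕ)) *ᵥ v))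
    (hdep : (A ^ r₁) *ᵥ v ∈ span F (Set.range fun k : Fin r₁ => (A ^ (k : ℕ)) *ᵥ v))
    (hr₁ : r₁ < n)
    (W₁ : Submodule F (Fin n → F))
    (hW₁ : W₁ = span F (Set.range fun k : Fin r₁ => (A ^ (k : ℕ)) *ᵥ v))
    (hinv : ∀ x ∈ W₁, A *ᵥ x ∈ W₁)
    (AR : Module.End F ((Fin n → F) ⧸ W₁))
    (hAR : ∀ x : Fin n → F, AR (Submodule.Quotient.mk x) =
      Submodule.Quotient.mk (A *ᵥ x)) :
    Module.finrank F
      (span F {x | ∃ k < n, ∃ j : Fin m, x = (A ^ k) *ᵥ (fun i => B i j)}) =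
    r₁ + Module.finrank F
      (span F {y : (Fin n → F) ⧸ W₁ | ∃ k < n - r₁, ∃ j : Fin m,
        y = (AR ^ k) (Submodule.Quotient.mk (fun i => B i j))}) := by

  classical
  set S₁ : Set (Fin n → F) :=
    {x | ∃ k < n, ∃ j : Fin m, x = (A ^ k) *ᵥ (fun i => B i j)} with hS₁
  set V : Submodule F (Fin n → F) := span F S₁ with hV
  -- dimension of W₁
  have hdimW : Module.finrank F W₁ = r₁ := by
    rw [hW₁, finrank_span_eq_card hind, Fintype.card_fin]
  -- W₁ ≤ V
  have hWV : W₁ ≤ V := by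
    rw [hW₁, span_le]
    rintro x ⟨k, rfl⟩
    exact subset_span ⟨k, lt_trans k.2 hr₁, ⟨0, hm⟩, by rw [hv]⟩
  -- key commutation
  have hcomm : ∀ (k : ℕ) (x : Fin n → F),
      (AR ^ k) (Submodule.Quotient.mk x) = Submodule.Quotient.mk ((A ^ k) *ᵥ x) := by
    intro k
    induction k with
    | zero => intro x; simp [Matrix.one_mulVec]
    | succ k ih =>
      intro x
      rw [pow_succ, Module.End.mul_apply, hAR, ih, Matrix.mulVec_mulVec, ← pow_succ]
  -- the quotient space and its dimension
  have hdimQ : Module.finrank F ((Fin n → F) ⧸ W₁) = n - r₁ := by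
    have := Submodule.finrank_quotient_add_finrank W₁
    rw [hdimW, Module.finrank_fin_fun] at this
    omega
  -- span with k < n - r₁ equals span with all k, via Cayley-Hamilton
  set d : ℕ := n - r₁ with hd
  have hdpos : 0 < d := by omega
  set U : Submodule F ((Fin n → F) ⧸ W₁) :=
    span F {y : (Fin n → F) ⧸ W₁ | ∃ k < d, ∃ j : Fin m,
      y = (AR ^ k) (Submodule.Quotient.mk (fun i => B i j))} with hU
  have hCH : ∀ y : (Fin n → F) ⧸ W₁, (AR ^ d) y =
      ∑ i ∈ Finset.range d, (-(AR.charpoly.coeff i)) • (AR ^ i) y := by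
    intro y
    have h0 : Polynomial.aeval AR AR.charpoly = 0 := LinearMap.aeval_self_charpoly AR
    have hdeg : AR.charpoly.natDegree = d := by
      rw [LinearMap.charpoly_natDegree, hdimQ]
    have hmon : AR.charpoly.Monic := LinearMap.charpoly_monic AR
    have hsum : Polynomial.aeval AR AR.charpoly =
        ∑ i ∈ Finset.range (d + 1), AR.charpoly.coeff i • AR ^ i := by
      rw [Polynomial.aeval_eq_sum_range, hdeg]
    rw [h0] at hsum
    have hco : AR.charpoly.coeff d = 1 := by
      rw [← hdeg]; exact hmon.coeff_natDegree
    have h2 := congrArg (fun f : Module.End F ((Fin n → F) ⧸ W₁) => f y) hsum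
    simp only [Finset.sum_range_succ, hco, one_smul, LinearMap.add_apply,
      LinearMap.sum_apply, LinearMap.smul_apply, LinearMap.zero_apply] at h2
    have h3 : (AR ^ d) y =
        -∑ i ∈ Finset.range d, AR.charpoly.coeff i • (AR ^ i) y :=
      eq_neg_of_add_eq_zero_right h2.symm
    rw [h3, neg_eq_iff_eq_neg, ← Finset.sum_neg_distrib]
    exact Finset.sum_congr rfl fun i _ => by rw [neg_smul, neg_neg]
  have hall : ∀ (k : ℕ) (j : Fin m),
      (AR ^ k) (Submodule.Quotient.mk (fun i => B i j)) ∈ U := by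
    intro k
    induction k using Nat.strong_induction_on with
    | _ k ih =>
      intro j
      by_cases hk : k < d
      · exact subset_span ⟨k, hk, j, rfl⟩
      · push_neg at hk
        set y : (Fin n → F) ⧸ W₁ := Submodule.Quotient.mk (fun i => B i j) with hy
        have : (AR ^ k) y = (AR ^ (k - d)) ((AR ^ d) y) := by
          rw [← Module.End.mul_apply, ← pow_add, Nat.sub_add_cancel hk]
        rw [this, hCH, map_sum]
        refine Submodule.sum_mem _ fun i hi => ?_
        rw [LinearMap.map_smul]
        refine Submodule.smul_mem _ _ ?_
        have : (AR ^ (k - d)) ((AR ^ i) y) = (AR ^ (k - d + i)) y := by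
          rw [pow_add, Module.End.mul_apply]
        rw [this]
        exact ih (k - d + i) (by simp only [Finset.mem_range] at hi; omega) j
  -- image of V under the quotient map
  have hmapV : V.map W₁.mkQ = U := by
    rw [hV, Submodule.map_span]
    apply le_antisymm
    · rw [span_le]
      rintro y ⟨x, ⟨k, hk, j, rfl⟩, rfl⟩
      rw [Submodule.mkQ_apply, ← hcomm]
      exact hall k j
    · rw [span_le]
      rintro y ⟨k, hk, j, rfl⟩
      rw [hcomm]
      exact subset_span ⟨(A ^ k) *ᵥ (fun i => B i j), ⟨k, by omega, j, rfl⟩, rfl⟩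
  -- rank-nullity for the restriction of the quotient map to V
  set f : V →ₗ[F] (Fin n → F) ⧸ W₁ := W₁.mkQ.comp V.subtype with hf
  have hrange : LinearMap.range f = U := by
    rw [hf, LinearMap.range_comp, Submodule.range_subtype, hmapV]
  have hker : LinearMap.ker f = W₁.comap V.subtype := by
    rw [hf, LinearMap.ker_comp, Submodule.ker_mkQ]
  have hkerdim : Module.finrank F (LinearMap.ker f) = r₁ := by
    rw [hker, ← hdimW]
    set_option synthInstance.maxHeartbeats 1000000 in
    exact (Submodule.comapSubtypeEquivOfLe hWV).finrank_eq
  have hrn := LinearMap.finrank_range_add_finrank_ker f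
  rw [hrange, hkerdim] at hrn
  rw [← hrn, add_comm]
end

section
/- Let A ∈ M_n(F) and B ∈ M_{n×m}(F) with Kalman decomposition T⁻¹AT = [[H,X],[0,Y]], T⁻¹B = [[B₁],[0]]. Then charpoly(A) = charpoly(H)·charpoly(Y), and the uncontrollable factor charpoly(Y) is independent of the choice of T: if T' is another invertible matrix giving a Kalman decomposition with blocks H', Y', then charpoly(Y') = charpoly(Y). -/
open Matrix Submodule

open Polynomial

private lemma charpoly_conj' {F : Type*} [Field F] {n : Type*} [Fintype n] [DecidableEq n]
    (P M : Matrix n n F) (hP : IsUnit P.det) :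
    (P⁻¹ * M * P).charpoly = M.charpoly := by
  classical
  have h1 : P⁻¹ * P = 1 := nonsing_inv_mul P hP
  have key : charmatrix (P⁻¹ * M * P)
      = (P⁻¹).map C * charmatrix M * P.map C := by
    rw [charmatrix, charmatrix]
    simp only [RingHom.mapMatrix_apply]
    rw [Matrix.mul_sub, Matrix.sub_mul]
    congr 1
    · rw [((scalar_commute (X : F[X]) (fun r' => Commute.all _ _) ((P⁻¹).map C)).eq).symm,
        Matrix.mul_assoc, ← Matrix.map_mul, h1,
        Matrix.map_one _ (map_zero C) (map_one C), Matrix.mul_one]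
    · rw [← Matrix.map_mul, ← Matrix.map_mul]
  have hdet : ((P⁻¹).map (C : F →+* F[X])).det * (P.map C).det = 1 := by
    rw [← det_mul, ← Matrix.map_mul, h1, Matrix.map_one _ (map_zero C) (map_one C), det_one]
  rw [Matrix.charpoly, key, det_mul, det_mul, Matrix.charpoly]
  linear_combination M.charmatrix.det * hdet

private lemma mem_colspan_of_supp {F : Type*} [Field F] {r s : ℕ}
    (T : Matrix (Fin r ⊕ Fin s) (Fin r ⊕ Fin s) F)
    (v : (Fin r ⊕ Fin s) → F) (hv : ∀ i, v (Sum.inr i) = 0) :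
    T *ᵥ v ∈ span F (Set.range fun j : Fin r => fun i => T i (Sum.inl j)) := by
  have hrep : T *ᵥ v = ∑ j : Fin r, v (Sum.inl j) • (fun i => T i (Sum.inl j)) := by
    ext i
    simp only [mulVec, dotProduct, Finset.sum_apply, Pi.smul_apply, smul_eq_mul]
    rw [Fintype.sum_sum_type]
    simp [hv, mul_comm]
  rw [hrep]
  exact Submodule.sum_mem _ fun j _ =>
    Submodule.smul_mem _ _ (subset_span ⟨j, rfl⟩)

private lemma kalman_span_eq_colspan {F : Type*} [Field F] {r s m : ℕ}
    (A : Matrix (Fin r ⊕ Fin s) (Fin r ⊕ Fin s) F)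
    (B : Matrix (Fin r ⊕ Fin s) (Fin m) F)
    (hr : Module.finrank F
      (span F {x | ∃ k < r + s, ∃ j : Fin m, x = (A ^ k) *ᵥ (fun i => B i j)}) = r)
    (T : Matrix (Fin r ⊕ Fin s) (Fin r ⊕ Fin s) F) (hT : IsUnit T.det)
    (H : Matrix (Fin r) (Fin r) F) (X : Matrix (Fin r) (Fin s) F)
    (Y : Matrix (Fin s) (Fin s) F) (B₁ : Matrix (Fin r) (Fin m) F)
    (hAT : A * T = T * fromBlocks H X 0 Y) (hBT : B = T * fromRows B₁ (0 : Matrix (Fin s) (Fin m) F)) :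
    span F {x | ∃ k < r + s, ∃ j : Fin m, x = (A ^ k) *ᵥ (fun i => B i j)}
      = span F (Set.range fun j : Fin r => fun i => T i (Sum.inl j)) := by
  classical
  set col : Fin r → ((Fin r ⊕ Fin s) → F) := fun j => fun i => T i (Sum.inl j) with hcol
  set V : Submodule F ((Fin r ⊕ Fin s) → F) := span F (Set.range col) with hV
  -- columns of B lie in V
  have hBmem : ∀ j : Fin m, (fun i => B i j) ∈ V := by
    intro j
    have : (fun i => B i j) = T *ᵥ (fun k => fromRows B₁ 0 k j) := by
      ext i
      rw [hBT]
      simp [mul_apply, mulVec, dotProduct]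
    rw [this]
    exact mem_colspan_of_supp T _ (fun i => rfl)
  -- A maps V into V
  have hAstep : ∀ v ∈ V, A *ᵥ v ∈ V := by
    intro v hv
    induction hv using Submodule.span_induction with
    | mem x hx =>
        obtain ⟨j, rfl⟩ := hx
        have hc : A *ᵥ col j = T *ᵥ (fun k => fromBlocks H X 0 Y k (Sum.inl j)) := by
          ext i
          have h1 : (A *ᵥ col j) i = (A * T) i (Sum.inl j) := by
            simp [mulVec, dotProduct, mul_apply, hcol]
          rw [h1, hAT]
          simp [mul_apply, mulVec, dotProduct]
        rw [hc]
        exact mem_colspan_of_supp T _ (fun i => by simp [fromBlocks])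
    | zero => simp
    | add x y hx hy ihx ihy => rw [mulVec_add]; exact add_mem ihx ihy
    | smul c x hx ih => rw [mulVec_smul]; exact smul_mem _ _ ih
  -- generators in V
  have hgen : ∀ (k : ℕ) (j : Fin m), (A ^ k) *ᵥ (fun i => B i j) ∈ V := by
    intro k j
    induction k with
    | zero => simpa using hBmem j
    | succ k ih =>
        rw [pow_succ', ← mulVec_mulVec]
        exact hAstep _ ih
  have hle : span F {x | ∃ k < r + s, ∃ j : Fin m, x = (A ^ k) *ᵥ (fun i => B i j)} ≤ V := by
    rw [span_le]
    rintro x ⟨k, -, j, rfl⟩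
    exact hgen k j
  -- linear independence of columns
  have hinj : Function.Injective T.mulVec :=
    mulVec_injective_iff_isUnit.mpr ((isUnit_iff_isUnit_det T).mpr hT)
  have hli : LinearIndependent F col := by
    have h1 : LinearIndependent F
        (fun j : Fin r => (Pi.single (Sum.inl j) 1 : (Fin r ⊕ Fin s) → F)) := by
      have h2 := (Pi.basisFun F (Fin r ⊕ Fin s)).linearIndependent.comp
        Sum.inl Sum.inl_injective
      simpa [Function.comp_def, Pi.basisFun_apply] using h2
    have h3 := h1.map' T.mulVecLin (LinearMap.ker_eq_bot.mpr (by exact hinj))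
    have h4 : (⇑T.mulVecLin ∘ fun j : Fin r =>
        (Pi.single (Sum.inl j) 1 : (Fin r ⊕ Fin s) → F)) = col := by
      funext j
      ext i
      simp [hcol, mulVecLin_apply, mulVec, dotProduct, Pi.single_apply, mul_ite,
        Finset.sum_ite_eq']
    rwa [h4] at h3
  have hdim : Module.finrank F V = r := by
    rw [hV, finrank_span_eq_card hli, Fintype.card_fin]
  exact Submodule.eq_of_le_of_finrank_le hle (by rw [hdim, hr])

private lemma mem_colspan_inr {F : Type*} [Field F] {r s : ℕ}
    (T : Matrix (Fin r ⊕ Fin s) (Fin r ⊕ Fin s) F) (hT : IsUnit T.det)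
    {x : (Fin r ⊕ Fin s) → F}
    (hx : x ∈ span F (Set.range fun j : Fin r => fun i => T i (Sum.inl j)))
    (i : Fin s) : (T⁻¹ *ᵥ x) (Sum.inr i) = 0 := by
  induction hx using Submodule.span_induction with
  | mem y hy =>
      obtain ⟨j, rfl⟩ := hy
      have h1 : (T⁻¹ *ᵥ fun i => T i (Sum.inl j)) (Sum.inr i)
          = (T⁻¹ * T) (Sum.inr i) (Sum.inl j) := by
        simp [mulVec, dotProduct, mul_apply]
      rw [h1, nonsing_inv_mul T hT]
      simp [one_apply]
  | zero => simp
  | add y z hy hz ihy ihz => rw [mulVec_add]; simp [ihy, ihz]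
  | smul c y hy ih => rw [mulVec_smul]; simp [ih]

/-- For any Kalman decomposition, `charpoly A = charpoly H · charpoly Y`, and the
uncontrollable factor `charpoly Y` does not depend on the choice of the decomposition. -/
theorem stmt19 {F : Type*} [Field F] {r s m : ℕ}
    (A : Matrix (Fin r ⊕ Fin s) (Fin r ⊕ Fin s) F)
    (B : Matrix (Fin r ⊕ Fin s) (Fin m) F)
    (hr : Module.finrank F
      (span F {x | ∃ k < r + s, ∃ j : Fin m, x = (A ^ k) *ᵥ (fun i => B i j)}) = r)
    (T T' : Matrix (Fin r ⊕ Fin s) (Fin r ⊕ Fin s) F)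
    (hT : IsUnit T.det) (hT' : IsUnit T'.det)
    (H H' : Matrix (Fin r) (Fin r) F) (X X' : Matrix (Fin r) (Fin s) F)
    (Y Y' : Matrix (Fin s) (Fin s) F) (B₁ B₁' : Matrix (Fin r) (Fin m) F)
    (hA : T⁻¹ * A * T = Matrix.fromBlocks H X 0 Y)
    (hB : T⁻¹ * B = Matrix.fromRows B₁ 0)
    (hA' : T'⁻¹ * A * T' = Matrix.fromBlocks H' X' 0 Y')
    (hB' : T'⁻¹ * B = Matrix.fromRows B₁' 0) :
    A.charpoly = H.charpoly * Y.charpoly ∧ Y'.charpoly = Y.charpoly := by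
  classical
  have hT1 : T⁻¹ * T = 1 := nonsing_inv_mul T hT
  have hT2 : T * T⁻¹ = 1 := mul_nonsing_inv T hT
  have hT1' : T'⁻¹ * T' = 1 := nonsing_inv_mul T' hT'
  have hT2' : T' * T'⁻¹ = 1 := mul_nonsing_inv T' hT'
  have hAT : A * T = T * fromBlocks H X 0 Y := by
    rw [← hA, ← Matrix.mul_assoc, ← Matrix.mul_assoc, hT2, Matrix.one_mul]
  have hBT : B = T * fromRows B₁ (0 : Matrix (Fin s) (Fin m) F) := by
    rw [← hB, ← Matrix.mul_assoc, hT2, Matrix.one_mul]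
  have hAT' : A * T' = T' * fromBlocks H' X' 0 Y' := by
    rw [← hA', ← Matrix.mul_assoc, ← Matrix.mul_assoc, hT2', Matrix.one_mul]
  have hBT' : B = T' * fromRows B₁' (0 : Matrix (Fin s) (Fin m) F) := by
    rw [← hB', ← Matrix.mul_assoc, hT2', Matrix.one_mul]
  have hpart1 : A.charpoly = H.charpoly * Y.charpoly := by
    rw [← charpoly_fromBlocks_zero₂₁, ← hA]
    exact (charpoly_conj' T A hT).symm
  refine ⟨hpart1, ?_⟩
  -- the two column spans coincide
  have hVT := kalman_span_eq_colspan A B hr T hT H X Y B₁ hAT hBT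
  have hVT' := kalman_span_eq_colspan A B hr T' hT' H' X' Y' B₁' hAT' hBT'
  -- lower-left block of T⁻¹ * T' vanishes
  have hS21 : ∀ (i : Fin s) (j : Fin r), (T⁻¹ * T') (Sum.inr i) (Sum.inl j) = 0 := by
    intro i j
    have hmem : (fun i => T' i (Sum.inl j))
        ∈ span F (Set.range fun j : Fin r => fun i => T i (Sum.inl j)) := by
      rw [← hVT, hVT']
      exact subset_span ⟨j, rfl⟩
    have h0 := mem_colspan_inr T hT hmem i
    have h1 : (T⁻¹ *ᵥ fun i => T' i (Sum.inl j)) (Sum.inr i)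
        = (T⁻¹ * T') (Sum.inr i) (Sum.inl j) := by
      simp [mulVec, dotProduct, mul_apply]
    rwa [h1] at h0
  obtain ⟨P, Q, R, hPQR⟩ : ∃ P Q R, T⁻¹ * T' = fromBlocks P Q 0 R := by
    refine ⟨toBlocks₁₁ (T⁻¹ * T'), toBlocks₁₂ (T⁻¹ * T'), toBlocks₂₂ (T⁻¹ * T'), ?_⟩
    ext i j
    cases i with
    | inl i => cases j with
      | inl j => simp [toBlocks₁₁]
      | inr j => simp [toBlocks₁₂]
    | inr i => cases j with
      | inl j => simpa [fromBlocks] using hS21 i j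
      | inr j => simp [toBlocks₂₂]
  have hRdet : IsUnit R.det := by
    have hinv : IsUnit (T⁻¹).det :=
      IsUnit.of_mul_eq_one (a := (T⁻¹).det) T.det (by rw [← det_mul, hT1, det_one])
    have hSdet : IsUnit ((T⁻¹ * T').det) := by
      rw [det_mul]; exact hinv.mul hT'
    rw [hPQR, det_fromBlocks_zero₂₁] at hSdet
    exact isUnit_of_mul_isUnit_right hSdet
  have hSM : (T⁻¹ * T') * fromBlocks H' X' 0 Y'
      = fromBlocks H X 0 Y * (T⁻¹ * T') := by
    rw [← hA, ← hA']
    simp only [Matrix.mul_assoc]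
    rw [← Matrix.mul_assoc T' T'⁻¹, hT2', Matrix.one_mul, ← Matrix.mul_assoc T T⁻¹, hT2,
      Matrix.one_mul]
  rw [hPQR, fromBlocks_multiply, fromBlocks_multiply] at hSM
  have h22 := congrArg toBlocks₂₂ hSM
  rw [toBlocks_fromBlocks₂₂, toBlocks_fromBlocks₂₂] at h22
  simp only [Matrix.zero_mul, Matrix.mul_zero, zero_add, add_zero] at h22
  -- h22 : R * Y' = Y * R
  have hY' : Y' = R⁻¹ * Y * R := by
    rw [Matrix.mul_assoc, ← h22, ← Matrix.mul_assoc, nonsing_inv_mul R hRdet, Matrix.one_mul]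
  rw [hY', charpoly_conj' R Y hRdet]
end
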